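/- Let L be a positive integer, let a, M be positive integers dividing L, and let h ∈ ℂ^L be such that G(h,a,M) is a Parseval frame, i.e. its frame operator equals the identity: Σ_{n=0}^{L/a−1} Σ_{m=0}^{M−1} ⟨f, M_{m/M}T_{na} h⟩ · (M_{m/M}T_{na} h) = f for all f ∈ ℂ^L. Then ‖h‖₂² = a/M. -/

import Mathlib

/-- The Gabor atom `M_{m/M} T_n g` on `ℂ^L` (identified with `ZMod L → ℂ`):
circular translation by `n` followed by modulation `e^{2πiml/M}`. -/
noncomputable def gaborAtom (L M : ℕ) [NeZero L] (g : ZMod L → ℂ) (m n : ℕ) :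
    ZMod L → ℂ :=
  fun l => g (l - (n : ZMod L)) *
    Complex.exp (2 * Real.pi * Complex.I * (m : ℂ) * (l.val : ℂ) / (M : ℂ))

/-- The inner product `⟨f, g⟩ = ∑_{l=0}^{L-1} f[l]·conj(g[l])` on `ℂ^L`. -/
noncomputable def ipL (L : ℕ) [NeZero L] (f g : ZMod L → ℂ) : ℂ :=
  ∑ l : ZMod L, f l * star (g l)

/-- if `G(h,a,M)` is a Parseval frame on `ℂ^L`, i.e. its frame operator
is the identity, then `‖h‖₂² = a/M`. -/
theorem parseval_window_norm
    (L a M : ℕ) [NeZero L] (ha : 0 < a) (hM : 0 < M) (haL : a ∣ L) (hML : M ∣ L)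
    (h : ZMod L → ℂ)
    (hpars : ∀ f : ZMod L → ℂ, ∀ l : ZMod L,
      (∑ n : Fin (L / a), ∑ m : Fin M,
        ipL L f (gaborAtom L M h m ((n : ℕ) * a)) *
          gaborAtom L M h m ((n : ℕ) * a) l) = f l) :
    ∑ l : ZMod L, ‖h l‖ ^ 2 = (a : ℝ) / (M : ℝ) := by
  classical
  -- modulus of the modulation factor is 1
  have hexp : ∀ (m : ℕ) (l : ZMod L),
      ‖Complex.exp (2 * Real.pi * Complex.I * (m : ℂ) * (l.val : ℂ) / (M : ℂ))‖ = 1 := by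
    intro m l
    have : (2 * Real.pi * Complex.I * (m : ℂ) * (l.val : ℂ) / (M : ℂ))
        = ((2 * Real.pi * (m : ℝ) * (l.val : ℝ) / (M : ℝ) : ℝ) : ℂ) * Complex.I := by
      push_cast; ring
    rw [this, Complex.norm_exp_ofReal_mul_I]
  have key : ∀ j : ZMod L,
      ∑ n : Fin (L / a), ∑ m : Fin M,
        ((‖h (j - (((n : ℕ) * a : ℕ) : ZMod L))‖ ^ 2 : ℝ) : ℂ) = 1 := by
    intro j
    have hp := hpars (fun l => if l = j then 1 else 0) j
    simp only [eq_self_iff_true, if_true] at hp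
    rw [← hp]
    refine Finset.sum_congr rfl fun n _ => Finset.sum_congr rfl fun m _ => ?_
    have hip : ipL L (fun l => if l = j then 1 else 0)
        (gaborAtom L M h m ((n : ℕ) * a)) = star (gaborAtom L M h m ((n : ℕ) * a) j) := by
      unfold ipL
      rw [Finset.sum_eq_single j]
      · simp
      · intro b _ hb; simp [hb]
      · intro hj; exact absurd (Finset.mem_univ j) hj
    rw [hip]
    have : star (gaborAtom L M h m ((n : ℕ) * a) j) * gaborAtom L M h m ((n : ℕ) * a) j
        = ((‖gaborAtom L M h m ((n : ℕ) * a) j‖) ^ 2 : ℝ) := by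
      rw [mul_comm, Complex.star_def, Complex.mul_conj, Complex.normSq_eq_norm_sq]
    rw [this]
    unfold gaborAtom
    rw [norm_mul, hexp, mul_one]
  -- sum over all j
  have total : ∑ j : ZMod L, ∑ n : Fin (L / a), ∑ m : Fin M,
      ((‖h (j - (((n : ℕ) * a : ℕ) : ZMod L))‖ ^ 2 : ℝ) : ℂ) = (L : ℂ) := by
    rw [Finset.sum_congr rfl fun j _ => key j]
    simp [ZMod.card]
  rw [Finset.sum_comm] at total
  have hswap : ∀ n : Fin (L / a), ∀ m : Fin M,
      ∑ j : ZMod L, ((‖h (j - (((n : ℕ) * a : ℕ) : ZMod L))‖ ^ 2 : ℝ) : ℂ)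
      = ∑ j : ZMod L, ((‖h j‖ ^ 2 : ℝ) : ℂ) := by
    intro n m
    exact Fintype.sum_equiv (Equiv.subRight ((((n : ℕ) * a : ℕ) : ZMod L))) _ _ (fun j => rfl)
  have total' : ∑ n : Fin (L / a), ∑ m : Fin M, ∑ j : ZMod L,
      ((‖h (j - (((n : ℕ) * a : ℕ) : ZMod L))‖ ^ 2 : ℝ) : ℂ) = (L : ℂ) := by
    rw [← total]
    exact Finset.sum_congr rfl fun n _ => Finset.sum_comm
  rw [Finset.sum_congr rfl fun n (_ : n ∈ Finset.univ) =>
    Finset.sum_congr rfl fun m (_ : m ∈ Finset.univ) => hswap n m] at total'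
  simp only [Finset.sum_const, Finset.card_univ, Fintype.card_fin, nsmul_eq_mul] at total'
  -- total' : (L/a) * (M * S) = L  in ℂ
  set S : ℝ := ∑ l : ZMod L, ‖h l‖ ^ 2 with hS
  have hSc : (∑ j : ZMod L, ((‖h j‖ ^ 2 : ℝ) : ℂ)) = (S : ℂ) := by
    rw [hS]; push_cast; rfl
  rw [hSc] at total'
  have hLa : (0 : ℕ) < L / a := Nat.div_pos (Nat.le_of_dvd (Nat.pos_of_ne_zero (NeZero.ne L)) haL) ha
  have hreal : ((L / a : ℕ) : ℝ) * ((M : ℝ) * S) = (L : ℝ) := by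
    have := total'
    exact_mod_cast this
  have hL : ((L / a : ℕ) : ℝ) * (a : ℝ) = (L : ℝ) := by
    exact_mod_cast congrArg (Nat.cast : ℕ → ℝ) (Nat.div_mul_cancel haL)
  have hMS : (M : ℝ) * S = (a : ℝ) := by
    have hne : ((L / a : ℕ) : ℝ) ≠ 0 := Nat.cast_ne_zero.mpr hLa.ne'
    have : ((L / a : ℕ) : ℝ) * ((M : ℝ) * S) = ((L / a : ℕ) : ℝ) * (a : ℝ) := by
      rw [hreal, hL]
    exact mul_left_cancel₀ hne this
  have hMne : (M : ℝ) ≠ 0 := Nat.cast_ne_zero.mpr hM.ne'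
  field_simp
  linarith [hMS]
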